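/- Let X : [0,∞) → ℝ² be continuous, twice continuously differentiable on (0,∞), with X(0) = X₀ and Ẋ(t) → 0 as t → 0⁺, satisfying Ẍ(t) + (3/t)·Ẋ(t) + ∇f_{ε,a}(X(t)) = 0 for all t > 0, and let J(t) = det(X(t), Ẋ(t)). If T > 0 is such that X₁(s) ≤ a for all s ≥ T, then the quantity t³·J(t) is constant on [T,∞); explicitly, t³·J(t) = ε·∫₀^T s³·X₂(s)·(X₁(s) − a)₊ ds for all t ≥ T. -/

import Mathlib

/-- `F(0) = 0`, `F(r) = ∫₀^r du/(−log u)` for `0 < r ≤ e⁻²`,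
`F(r) = F(e⁻²) + (1/2)(r − e⁻²)` for `r ≥ e⁻²`. -/
noncomputable def F (r : ℝ) : ℝ :=
  if r ≤ Real.exp (-2) then ∫ u in (0:ℝ)..r, 1 / (-Real.log u)
  else (∫ u in (0:ℝ)..Real.exp (-2), 1 / (-Real.log u)) + (1/2) * (r - Real.exp (-2))

/-- `f_{ε,a}(x₁,x₂) = F(√(x₁²+x₂²)) + (ε/2)·((x₁ − a)₊)²`. -/
noncomputable def feps (ε a : ℝ) (x : EuclideanSpace ℝ (Fin 2)) : ℝ :=
  F (Real.sqrt ((x 0)^2 + (x 1)^2)) + (ε/2) * (max (x 0 - a) 0)^2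

noncomputable def Fd (r : ℝ) : ℝ := if r ≤ Real.exp (-2) then (-Real.log r)⁻¹ else 1/2

lemma phi_intervalIntegrable {r : ℝ} (hr0 : 0 < r) (hr : r ≤ Real.exp (-2)) :
    IntervalIntegrable (fun u : ℝ => 1 / (-Real.log u)) MeasureTheory.volume 0 r := by
  rw [intervalIntegrable_iff, Set.uIoc_of_le hr0.le]
  apply MeasureTheory.Measure.integrableOn_of_bounded (M := 1/2)
  · simp [Real.volume_Ioc]
  · exact ((measurable_const.div Real.measurable_log.neg)).aestronglyMeasurable
  · rw [MeasureTheory.ae_restrict_iff' measurableSet_Ioc]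
    filter_upwards with u hu
    have hu1 : u ≤ Real.exp (-2) := hu.2.trans hr
    have hlog : Real.log u ≤ -2 := by
      calc Real.log u ≤ Real.log (Real.exp (-2)) := Real.log_le_log hu.1 hu1
      _ = -2 := Real.log_exp _
    have h2 : (2:ℝ) ≤ -Real.log u := by linarith
    rw [Real.norm_eq_abs, abs_of_nonneg (by positivity)]
    rw [div_le_div_iff₀ (by linarith) (by norm_num)]
    linarith

open intervalIntegral in
lemma phi_contAt {r : ℝ} (hr0 : 0 < r) (hr : r ≤ Real.exp (-2)) :
    ContinuousAt (fun u : ℝ => 1 / (-Real.log u)) r := by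
  have h1 : r < 1 := lt_of_le_of_lt hr (by rw [Real.exp_lt_one_iff]; norm_num)
  have hlog : Real.log r ≠ 0 := by
    have := Real.log_neg hr0 h1; linarith
  exact continuousAt_const.div ((Real.continuousAt_log hr0.ne').neg) (by simpa using hlog)

open intervalIntegral in
lemma intF_hasDerivAt {r : ℝ} (hr0 : 0 < r) (hr : r ≤ Real.exp (-2)) :
    HasDerivAt (fun s : ℝ => ∫ u in (0:ℝ)..s, 1 / (-Real.log u)) (1 / (-Real.log r)) r :=
  integral_hasDerivAt_right (phi_intervalIntegrable hr0 hr)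
    ((measurable_const.div Real.measurable_log.neg).stronglyMeasurable.stronglyMeasurableAtFilter)
    (phi_contAt hr0 hr)

lemma lin_hasDerivAt (C c r : ℝ) :
    HasDerivAt (fun s : ℝ => C + (1/2) * (s - c)) (1/2) r := by
  have := (((hasDerivAt_id r).sub_const c).const_mul (1/2)).const_add C
  simpa using this

lemma F_hasDerivAt {r : ℝ} (hr0 : 0 < r) : HasDerivAt F (Fd r) r := by
  have hc0 : (0:ℝ) < Real.exp (-2) := Real.exp_pos _
  rcases lt_trichotomy r (Real.exp (-2)) with h | h | h
  · have heq : F =ᶠ[nhds r] (fun s : ℝ => ∫ u in (0:ℝ)..s, 1 / (-Real.log u)) := by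
      filter_upwards [Iio_mem_nhds h] with s hs
      exact if_pos (le_of_lt (Set.mem_Iio.mp hs))
    have : HasDerivAt F (1 / (-Real.log r)) r :=
      (intF_hasDerivAt hr0 h.le).congr_of_eventuallyEq heq
    simpa [Fd, if_pos h.le, one_div] using this
  · have hlog : Real.log r = -2 := by rw [h, Real.log_exp]
    have hFd : Fd r = 1/2 := by
      rw [Fd, if_pos h.le, hlog]; norm_num
    rw [hFd]
    have hleft : HasDerivWithinAt F (1/2) (Set.Iic r) r := by
      have h2 := intF_hasDerivAt hr0 h.le
      have h2' : HasDerivAt (fun s : ℝ => ∫ u in (0:ℝ)..s, 1 / (-Real.log u)) (1/2) r := by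
        convert h2 using 1; rw [hlog]; norm_num
      exact (h2'.hasDerivWithinAt).congr
        (fun s hs => if_pos ((hs : s ≤ r).trans h.le)) (if_pos h.le)
    have hright : HasDerivWithinAt F (1/2) (Set.Ici r) r := by
      have h1 := lin_hasDerivAt (∫ u in (0:ℝ)..Real.exp (-2), 1 / (-Real.log u)) (Real.exp (-2)) r
      refine (h1.hasDerivWithinAt).congr (fun s hs => ?_) ?_
      · rcases eq_or_lt_of_le (Set.mem_Ici.mp hs) with h2 | h2
        · rw [F, if_pos (h2 ▸ h.le), ← h2, h]; ring
        · rw [F, if_neg (not_le.mpr (h ▸ h2))]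
      · rw [F, if_pos h.le, h]; ring
    have h3 := hleft.union hright
    rwa [Set.Iic_union_Ici, hasDerivWithinAt_univ] at h3
  · have heq : F =ᶠ[nhds r] (fun s : ℝ =>
        (∫ u in (0:ℝ)..Real.exp (-2), 1 / (-Real.log u)) + (1/2) * (s - Real.exp (-2))) := by
      filter_upwards [Ioi_mem_nhds h] with s hs
      exact if_neg (not_le.mpr (Set.mem_Ioi.mp hs))
    have h1 := (lin_hasDerivAt (∫ u in (0:ℝ)..Real.exp (-2), 1 / (-Real.log u))
      (Real.exp (-2)) r).congr_of_eventuallyEq heq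
    rwa [Fd, if_neg (not_le.mpr h)]

lemma sq_max_hasDerivAt (a u : ℝ) :
    HasDerivAt (fun v : ℝ => max (v - a) 0 ^ 2) (2 * max (u - a) 0) u := by
  rcases lt_trichotomy u a with h | h | h
  · have heq : (fun v : ℝ => max (v - a) 0 ^ 2) =ᶠ[nhds u] fun _ => (0:ℝ) := by
      filter_upwards [Iio_mem_nhds h] with v hv
      rw [max_eq_right (by simp at hv ⊢; linarith)]; ring
    have h0 : HasDerivAt (fun _ : ℝ => (0:ℝ)) 0 u := hasDerivAt_const u 0
    have := h0.congr_of_eventuallyEq heq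
    simpa [max_eq_right (by linarith : u - a ≤ 0)] using this
  · subst h
    rw [hasDerivAt_iff_isLittleO]
    rw [Asymptotics.isLittleO_iff]
    intro c hc
    filter_upwards [Metric.ball_mem_nhds u hc] with v hv
    rw [Metric.mem_ball, Real.dist_eq] at hv
    have h1 : max (v - u) 0 ≤ |v - u| := max_le (le_abs_self _) (abs_nonneg _)
    have h2 : (0:ℝ) ≤ max (v - u) 0 := le_max_right _ 0
    simp only [sub_self, max_self, ne_eq, OfNat.ofNat_ne_zero, not_false_eq_true, zero_pow,
      sub_zero, mul_zero, smul_zero, Real.norm_eq_abs]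
    calc |max (v - u) 0 ^ 2| = max (v - u) 0 * max (v - u) 0 := by
          rw [abs_of_nonneg (by positivity)]; ring
      _ ≤ |v - u| * |v - u| := by nlinarith
      _ ≤ c * ‖v - u‖ := by
          rw [Real.norm_eq_abs]
          nlinarith [abs_nonneg (v - u)]
  · have heq : (fun v : ℝ => max (v - a) 0 ^ 2) =ᶠ[nhds u] fun v => (v - a) ^ 2 := by
      filter_upwards [Ioi_mem_nhds h] with v hv
      rw [max_eq_left (by simp at hv ⊢; linarith)]
    have h0 : HasDerivAt (fun v : ℝ => (v - a) ^ 2) (2 * (u - a)) u := by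
      simpa using ((hasDerivAt_id u).sub_const a).fun_pow 2
    have := h0.congr_of_eventuallyEq heq
    simpa [max_eq_left (by linarith : 0 ≤ u - a)] using this

open EuclideanSpace in
lemma feps_hasFDerivAt (ε a : ℝ) (x : EuclideanSpace ℝ (Fin 2))
    (hx : (x 0)^2 + (x 1)^2 ≠ 0) :
    HasFDerivAt (feps ε a)
      (((Fd (Real.sqrt ((x 0)^2 + (x 1)^2)) * (1 / (2 * Real.sqrt ((x 0)^2 + (x 1)^2)))) •
          ((2 * x 0) • (proj 0 : EuclideanSpace ℝ (Fin 2) →L[ℝ] ℝ)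
            + (2 * x 1) • (proj 1 : EuclideanSpace ℝ (Fin 2) →L[ℝ] ℝ)))
        + (ε / 2 * (2 * max (x 0 - a) 0)) • (proj 0 : EuclideanSpace ℝ (Fin 2) →L[ℝ] ℝ)) x := by
  have hq : HasFDerivAt (fun y : EuclideanSpace ℝ (Fin 2) => (y 0)^2 + (y 1)^2)
      ((2 * x 0) • (proj 0 : EuclideanSpace ℝ (Fin 2) →L[ℝ] ℝ)
        + (2 * x 1) • (proj 1 : EuclideanSpace ℝ (Fin 2) →L[ℝ] ℝ)) x := by
    have hfun : (fun y : EuclideanSpace ℝ (Fin 2) => (y 0)^2 + (y 1)^2)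
        = fun y : EuclideanSpace ℝ (Fin 2) =>
            (proj 0 : EuclideanSpace ℝ (Fin 2) →L[ℝ] ℝ) y * (proj 0 : EuclideanSpace ℝ (Fin 2) →L[ℝ] ℝ) y
              + (proj 1 : EuclideanSpace ℝ (Fin 2) →L[ℝ] ℝ) y * (proj 1 : EuclideanSpace ℝ (Fin 2) →L[ℝ] ℝ) y := by
      funext y; simp [PiLp.proj_apply]; ring
    rw [hfun]
    have h0 := ((proj 0 : EuclideanSpace ℝ (Fin 2) →L[ℝ] ℝ).hasFDerivAt (x := x)).mul
      ((proj 0 : EuclideanSpace ℝ (Fin 2) →L[ℝ] ℝ).hasFDerivAt (x := x))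
    have h1 := ((proj 1 : EuclideanSpace ℝ (Fin 2) →L[ℝ] ℝ).hasFDerivAt (x := x)).mul
      ((proj 1 : EuclideanSpace ℝ (Fin 2) →L[ℝ] ℝ).hasFDerivAt (x := x))
    have h2 := h0.add h1
    refine h2.congr_fderiv ?_
    simp [PiLp.proj_apply]
    module
  have hr0 : 0 < Real.sqrt ((x 0)^2 + (x 1)^2) := by
    apply Real.sqrt_pos.mpr
    rcases hx.lt_or_gt with h | h
    · nlinarith [sq_nonneg (x 0), sq_nonneg (x 1)]
    · exact h
  have hs : HasDerivAt Real.sqrt (1 / (2 * Real.sqrt ((x 0)^2 + (x 1)^2))) ((x 0)^2 + (x 1)^2) :=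
    Real.hasDerivAt_sqrt hx
  have hFs : HasDerivAt (fun t : ℝ => F (Real.sqrt t))
      (Fd (Real.sqrt ((x 0)^2 + (x 1)^2)) * (1 / (2 * Real.sqrt ((x 0)^2 + (x 1)^2))))
      ((x 0)^2 + (x 1)^2) := (F_hasDerivAt hr0).comp _ hs
  have h1 : HasFDerivAt (fun y : EuclideanSpace ℝ (Fin 2) => F (Real.sqrt ((y 0)^2 + (y 1)^2)))
      ((Fd (Real.sqrt ((x 0)^2 + (x 1)^2)) * (1 / (2 * Real.sqrt ((x 0)^2 + (x 1)^2)))) •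
        ((2 * x 0) • (proj 0 : EuclideanSpace ℝ (Fin 2) →L[ℝ] ℝ)
          + (2 * x 1) • (proj 1 : EuclideanSpace ℝ (Fin 2) →L[ℝ] ℝ))) x :=
    by have := hFs.comp_hasFDerivAt x hq; exact this
  have h2 : HasFDerivAt (fun y : EuclideanSpace ℝ (Fin 2) => (ε/2) * (max (y 0 - a) 0)^2)
      ((ε / 2 * (2 * max (x 0 - a) 0)) • (proj 0 : EuclideanSpace ℝ (Fin 2) →L[ℝ] ℝ)) x :=
    by have := ((sq_max_hasDerivAt a (x 0)).const_mul (ε/2)).comp_hasFDerivAt x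
        (proj 0 : EuclideanSpace ℝ (Fin 2) →L[ℝ] ℝ).hasFDerivAt; exact this
  exact h1.add h2

lemma euclidean_eq_zero_of_sq (x : EuclideanSpace ℝ (Fin 2))
    (h : (x 0)^2 + (x 1)^2 = 0) : x = 0 := by
  have h0 : x 0 = 0 := by nlinarith [sq_nonneg (x 0), sq_nonneg (x 1)]
  have h1 : x 1 = 0 := by nlinarith [sq_nonneg (x 0), sq_nonneg (x 1)]
  ext i
  fin_cases i <;> simpa

lemma det_grad (ε a : ℝ) (x : EuclideanSpace ℝ (Fin 2)) :
    x 0 * (gradient (feps ε a) x) 1 - x 1 * (gradient (feps ε a) x) 0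
      = -(ε * x 1 * max (x 0 - a) 0) := by
  by_cases hx : (x 0)^2 + (x 1)^2 = 0
  · have h0 := euclidean_eq_zero_of_sq x hx
    subst h0
    simp
  · have hL := feps_hasFDerivAt ε a x hx
    have hgrad : ∀ i : Fin 2, (gradient (feps ε a) x) i
        = (fderiv ℝ (feps ε a) x) (EuclideanSpace.single i 1) := by
      intro i
      have h1 : (inner ℝ ((InnerProductSpace.toDual ℝ (EuclideanSpace ℝ (Fin 2))).symm
            (fderiv ℝ (feps ε a) x)) (EuclideanSpace.single i (1:ℝ)) : ℝ)
          = (fderiv ℝ (feps ε a) x) (EuclideanSpace.single i 1) :=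
        InnerProductSpace.toDual_symm_apply
      rw [gradient, ← h1, EuclideanSpace.inner_single_right]
      simp
    rw [hgrad 0, hgrad 1, hL.fderiv]
    have hproj : ∀ i j : Fin 2,
        (EuclideanSpace.proj i : EuclideanSpace ℝ (Fin 2) →L[ℝ] ℝ) (EuclideanSpace.single j 1)
          = if i = j then 1 else 0 := by
      intro i j
      by_cases h : i = j <;>
        simp [PiLp.proj_apply, EuclideanSpace.single_apply, h, eq_comm]
    simp only [ContinuousLinearMap.add_apply, ContinuousLinearMap.smul_apply, hproj]
    norm_num
    ring

/-- along a solution `X` of the Nesterov flow for `f_{ε,a}`, with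
`J(t) = det(X(t), Ẋ(t))`, if `T > 0` is such that `X₁(s) ≤ a` for all `s ≥ T`, then
`t³·J(t) = ε·∫₀^T s³·X₂(s)·(X₁(s) − a)₊ ds` for all `t ≥ T`; in particular `t³·J(t)`
is constant on `[T,∞)`. -/
theorem angular_momentum_conservation (a ε : ℝ) (ha : 0 < a) (hε : 0 < ε)
    (X₀ : EuclideanSpace ℝ (Fin 2)) (X X' X'' : ℝ → EuclideanSpace ℝ (Fin 2))
    (hXcont : ContinuousOn X (Set.Ici 0))
    (hX' : ∀ t > (0:ℝ), HasDerivAt X (X' t) t)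
    (hX'' : ∀ t > (0:ℝ), HasDerivAt X' (X'' t) t)
    (hX''cont : ContinuousOn X'' (Set.Ioi 0))
    (hX0 : X 0 = X₀)
    (hX'0 : Filter.Tendsto X' (nhdsWithin 0 (Set.Ioi 0)) (nhds 0))
    (hODE : ∀ t > (0:ℝ), X'' t + (3 / t) • X' t + gradient (feps ε a) (X t) = 0)
    (J : ℝ → ℝ) (hJ : ∀ t, J t = X t 0 * X' t 1 - X t 1 * X' t 0)
    (T : ℝ) (hT : 0 < T) (hrad : ∀ s ≥ T, X s 0 ≤ a) :
    ∀ t ≥ T,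
      t ^ 3 * J t = ε * ∫ s in (0:ℝ)..T, s ^ 3 * X s 1 * max (X s 0 - a) 0 := by
  set g : ℝ → ℝ := fun s => ε * (s ^ 3 * X s 1 * max (X s 0 - a) 0) with hg
  set Φ : ℝ → ℝ := fun t => t ^ 3 * J t with hΦ
  -- coordinate derivative helpers
  have hXi : ∀ (i : Fin 2), ∀ t > (0:ℝ), HasDerivAt (fun s => X s i) (X' t i) t := by
    intro i t ht
    exact (EuclideanSpace.proj i : EuclideanSpace ℝ (Fin 2) →L[ℝ] ℝ).hasFDerivAt.comp_hasDerivAt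
      t (hX' t ht)
  have hX'i : ∀ (i : Fin 2), ∀ t > (0:ℝ), HasDerivAt (fun s => X' s i) (X'' t i) t := by
    intro i t ht
    exact (EuclideanSpace.proj i : EuclideanSpace ℝ (Fin 2) →L[ℝ] ℝ).hasFDerivAt.comp_hasDerivAt
      t (hX'' t ht)
  -- derivative of Φ
  have hΦd : ∀ t > (0:ℝ), HasDerivAt Φ (g t) t := by
    intro t ht
    have hJfun : J = fun s => X s 0 * X' s 1 - X s 1 * X' s 0 := funext hJ
    have hJd : HasDerivAt J
        (X' t 0 * X' t 1 + X t 0 * X'' t 1 - (X' t 1 * X' t 0 + X t 1 * X'' t 0)) t := by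
      rw [hJfun]
      exact ((hXi 0 t ht).mul (hX'i 1 t ht)).sub ((hXi 1 t ht).mul (hX'i 0 t ht))
    have hmul := (hasDerivAt_pow 3 t).mul hJd
    have hode : ∀ i : Fin 2, X'' t i = -((3 / t) * X' t i) - gradient (feps ε a) (X t) i := by
      intro i
      have h0 := congrArg (fun v : EuclideanSpace ℝ (Fin 2) => v i) (hODE t ht)
      simp only [PiLp.add_apply, PiLp.smul_apply, PiLp.zero_apply, smul_eq_mul] at h0
      linarith
    have hdet := det_grad ε a (X t)
    have hkey : (↑3 * t ^ (3-1)) * J t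
        + t ^ 3 * (X' t 0 * X' t 1 + X t 0 * X'' t 1 - (X' t 1 * X' t 0 + X t 1 * X'' t 0))
        = g t := by
      rw [hJ t, hode 0, hode 1, hg]
      have ht' : t ≠ 0 := ne_of_gt ht
      field_simp
      linear_combination (-(t^3)) * hdet
    rw [hΦ]
    rw [← hkey]; exact hmul
  -- continuity of g
  have hXci : ∀ i : Fin 2, ContinuousOn (fun s => X s i) (Set.Ici 0) := fun i =>
    (EuclideanSpace.proj i : EuclideanSpace ℝ (Fin 2) →L[ℝ] ℝ).continuous.comp_continuousOn
      hXcont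
  have hgcont : ContinuousOn g (Set.Ici 0) := by
    apply continuousOn_const.mul
    exact ((continuousOn_pow 3).mul (hXci 1)).mul
      (ContinuousOn.sup (ContinuousOn.sub (hXci 0) continuousOn_const) continuousOn_const)
  -- limit of Φ at 0+
  have hΦ0 : Filter.Tendsto Φ (nhdsWithin 0 (Set.Ioi 0)) (nhds 0) := by
    have hXt : Filter.Tendsto X (nhdsWithin 0 (Set.Ioi 0)) (nhds (X 0)) :=
      (hXcont.continuousWithinAt (Set.self_mem_Ici)).mono_left
        (nhdsWithin_mono 0 Set.Ioi_subset_Ici_self)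
    have hXti : ∀ i : Fin 2, Filter.Tendsto (fun s => X s i) (nhdsWithin 0 (Set.Ioi 0))
        (nhds (X 0 i)) := fun i =>
      ((EuclideanSpace.proj i : EuclideanSpace ℝ (Fin 2) →L[ℝ] ℝ).continuous.tendsto
        (X 0)).comp hXt
    have hX'ti : ∀ i : Fin 2, Filter.Tendsto (fun s => X' s i) (nhdsWithin 0 (Set.Ioi 0))
        (nhds 0) := by
      intro i
      have := ((EuclideanSpace.proj i : EuclideanSpace ℝ (Fin 2) →L[ℝ] ℝ).continuous.tendsto
        (0 : EuclideanSpace ℝ (Fin 2))).comp hX'0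
      simpa [Function.comp_def] using this
    have hs3 : Filter.Tendsto (fun s : ℝ => s ^ 3) (nhdsWithin 0 (Set.Ioi 0)) (nhds 0) := by
      have := ((continuous_pow 3 (M := ℝ)).tendsto 0).mono_left
        (nhdsWithin_le_nhds (s := Set.Ioi (0:ℝ)))
      simpa using this
    have hJfun : J = fun s => X s 0 * X' s 1 - X s 1 * X' s 0 := funext hJ
    have := hs3.mul (((hXti 0).mul (hX'ti 1)).sub ((hXti 1).mul (hX'ti 0)))
    rw [hΦ, hJfun]
    simpa using this
  -- continuity of Φ on [0, t]
  have hΦcont : ∀ t > (0:ℝ), ContinuousOn Φ (Set.Icc 0 t) := by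
    intro t ht s hs
    rcases eq_or_lt_of_le hs.1 with h0 | h0
    · have h1 : ContinuousWithinAt Φ (Set.Ioi 0) 0 := by
        have hΦz : Φ 0 = 0 := by simp [hΦ]
        rw [ContinuousWithinAt, hΦz]
        exact hΦ0
      have h2 : ContinuousWithinAt Φ {0} 0 := continuousWithinAt_singleton
      have h3 := h1.union h2
      rw [Set.Ioi_union_left] at h3
      rw [← h0]
      exact h3.mono (fun y hy => hy.1)
    · exact ((hΦd s h0).continuousAt).continuousWithinAt
  intro t htT
  have h0t : (0:ℝ) ≤ t := le_trans hT.le htT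
  have htpos : (0:ℝ) < t := lt_of_lt_of_le hT htT
  have hderivIoo : ∀ s ∈ Set.Ioo (0:ℝ) t, HasDerivWithinAt Φ (g s) (Set.Ioi s) s :=
    fun s hs => (hΦd s hs.1).hasDerivWithinAt
  have hgi1 : IntervalIntegrable g MeasureTheory.volume 0 t := by
    apply (hgcont.mono ?_).intervalIntegrable
    rw [Set.uIcc_of_le h0t]; exact fun y hy => hy.1
  have hFTC := intervalIntegral.integral_eq_sub_of_hasDeriv_right_of_le h0t
    (hΦcont t htpos) hderivIoo hgi1
  have hΦz : Φ 0 = 0 := by simp [hΦ]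
  rw [hΦz, sub_zero] at hFTC
  have hgi2 : IntervalIntegrable g MeasureTheory.volume 0 T := by
    apply (hgcont.mono ?_).intervalIntegrable
    rw [Set.uIcc_of_le hT.le]; exact fun y hy => hy.1
  have hgi3 : IntervalIntegrable g MeasureTheory.volume T t := by
    apply (hgcont.mono ?_).intervalIntegrable
    rw [Set.uIcc_of_le htT]; exact fun y hy => le_trans hT.le hy.1
  have hsplit := intervalIntegral.integral_add_adjacent_intervals hgi2 hgi3
  have hzero : (∫ s in T..t, g s) = 0 := by
    have heqz : Set.EqOn g (fun _ => (0:ℝ)) (Set.uIcc T t) := by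
      intro s hs
      rw [Set.uIcc_of_le htT] at hs
      have hXa : X s 0 ≤ a := hrad s hs.1
      simp only [hg]
      rw [max_eq_right (by linarith : X s 0 - a ≤ 0)]
      ring
    rw [intervalIntegral.integral_congr heqz, intervalIntegral.integral_zero]
  have hfinal : Φ t = ∫ s in (0:ℝ)..T, g s := by
    rw [← hFTC, ← hsplit, hzero, add_zero]
  calc t ^ 3 * J t = ∫ s in (0:ℝ)..T, g s := hfinal
    _ = ε * ∫ s in (0:ℝ)..T, s ^ 3 * X s 1 * max (X s 0 - a) 0 := by
        simp only [hg]
        rw [intervalIntegral.integral_const_mul]
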